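/- arXiv:0811.1026 — 6 statements merged into one kernel-verified Lean document; each statement's English description precedes it below -/
import Mathlib

section
/- Let K be a nonempty compact subset of a Hausdorff topological group G. The following are equivalent: (1) K is a regular element of the semigroup exp(G), i.e., K·L·K = K for some nonempty compact L ⊆ G; (2) K is uniquely invertible in exp(G), i.e., there exists exactly one nonempty compact L ⊆ G with K·L·K = K and L·K·L = L; (3) K = H·x for some compact subgroup H of G and some x ∈ G. -/
open Set Pointwise Filter

lemma aux_one_mem_and_inv_mem {G : Type*} [Group G] [TopologicalSpace G]
    [IsTopologicalGroup G] [T2Space G] {S : Set G} (hne : S.Nonempty) (hc : IsCompact S)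
    (hmul : S * S ⊆ S) : (1 : G) ∈ S ∧ ∀ s ∈ S, s⁻¹ ∈ S := by
  have hpow : ∀ s ∈ S, ∀ n : ℕ, s ^ (n + 1) ∈ S := by
    intro s hs n
    induction n with
    | zero => simpa using hs
    | succ n ih => rw [pow_succ]; exact hmul (Set.mul_mem_mul ih hs)
  have claimA : ∀ s ∈ S, ∀ U ∈ nhds (1 : G), ∃ k : ℕ, s ^ (k + 1) ∈ U := by
    intro s hs U hU
    have hle : Filter.map (fun n : ℕ => s ^ (n + 1)) Filter.atTop ≤ Filter.principal S := by
      rw [Filter.le_principal_iff, Filter.mem_map]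
      exact Filter.Eventually.of_forall fun n => hpow s hs n
    obtain ⟨x, hxS, hx⟩ := hc.exists_clusterPt hle
    have hx' : MapClusterPt x Filter.atTop (fun n : ℕ => s ^ (n + 1)) := hx
    have hcont : ContinuousAt (fun p : G × G => p.1⁻¹ * p.2) (x, x) := by fun_prop
    have hpre : (fun p : G × G => p.1⁻¹ * p.2) ⁻¹' U ∈ nhds (x, x) :=
      hcont.preimage_mem_nhds (by simpa using hU)
    rw [nhds_prod_eq, Filter.mem_prod_iff] at hpre
    obtain ⟨W₁, hW₁, W₂, hW₂, hW⟩ := hpre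
    have hfreq : ∃ᶠ n in Filter.atTop, s ^ (n + 1) ∈ W₁ ∩ W₂ :=
      mapClusterPt_iff_frequently.mp hx' _ (Filter.inter_mem hW₁ hW₂)
    obtain ⟨n, hn⟩ := hfreq.exists
    obtain ⟨m, hm, hmn⟩ := (hfreq.and_eventually (Filter.eventually_ge_atTop (n + 1))).exists
    refine ⟨m - n - 1, ?_⟩
    have hkey : (s ^ (n + 1))⁻¹ * s ^ (m + 1) = s ^ (m - n - 1 + 1) := by
      rw [inv_mul_eq_iff_eq_mul, ← pow_add]
      congr 1
      omega
    have hmem : (s ^ (n + 1), s ^ (m + 1)) ∈ W₁ ×ˢ W₂ := ⟨hn.1, hm.2⟩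
    have := hW hmem
    rwa [Set.mem_preimage, hkey] at this
  have hSclosed : IsClosed S := hc.isClosed
  have h1S : (1 : G) ∈ S := by
    obtain ⟨s, hs⟩ := hne
    have : (1 : G) ∈ closure S := by
      rw [mem_closure_iff_nhds]
      intro U hU
      obtain ⟨k, hk⟩ := claimA s hs U hU
      exact ⟨s ^ (k + 1), hk, hpow s hs k⟩
    rwa [hSclosed.closure_eq] at this
  refine ⟨h1S, fun s hs => ?_⟩
  have : s⁻¹ ∈ closure S := by
    rw [mem_closure_iff_nhds]
    intro U hU
    have hcont : ContinuousAt (fun y : G => s⁻¹ * y) 1 := by fun_prop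
    have hV : (fun y : G => s⁻¹ * y) ⁻¹' U ∈ nhds (1 : G) :=
      hcont.preimage_mem_nhds (by simpa using hU)
    obtain ⟨k, hk⟩ := claimA s hs _ hV
    refine ⟨s⁻¹ * s ^ (k + 1), hk, ?_⟩
    have heq : s⁻¹ * s ^ (k + 1) = s ^ k := by
      rw [pow_succ']; group
    rw [heq]
    cases k with
    | zero => simpa using h1S
    | succ k => exact hpow s hs k
  rwa [hSclosed.closure_eq] at this

section aux

variable {G : Type*} [Group G] [TopologicalSpace G] [IsTopologicalGroup G] [T2Space G]

lemma aux_reg_to_coset {K : Set G} (hne : K.Nonempty) (hcomp : IsCompact K)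
    (h : ∃ L : Set G, L.Nonempty ∧ IsCompact L ∧ K * L * K = K) :
    ∃ (H : Subgroup G) (x : G), IsCompact (H : Set G) ∧ K = (H : Set G) * {x} := by
  obtain ⟨L, hLne, hLc, hKLK⟩ := h
  have hPmul : (K * L) * (K * L) ⊆ K * L := by
    rw [← mul_assoc (K * L) K L, hKLK]
  have hQmul : (L * K) * (L * K) ⊆ L * K := by
    rw [mul_assoc L K (L * K), ← mul_assoc K L K, hKLK]
  have hPne : (K * L).Nonempty := hne.mul hLne
  have hQne : (L * K).Nonempty := hLne.mul hne
  have hPc : IsCompact (K * L) := hcomp.mul hLc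
  have hQc : IsCompact (L * K) := hLc.mul hcomp
  obtain ⟨hP1, hPinv⟩ := aux_one_mem_and_inv_mem hPne hPc hPmul
  obtain ⟨hQ1, -⟩ := aux_one_mem_and_inv_mem hQne hQc hQmul
  refine ⟨{ carrier := K * L
            mul_mem' := fun ha hb => hPmul (Set.mul_mem_mul ha hb)
            one_mem' := hP1
            inv_mem' := fun ha => hPinv _ ha }, ?_⟩
  obtain ⟨l, hl, k, hk, hlk⟩ := hQ1
  refine ⟨k, hPc, ?_⟩
  apply Set.Subset.antisymm
  · intro y hy
    refine ⟨y * l, Set.mul_mem_mul hy hl, k, rfl, ?_⟩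
    have hlk' : l * k = 1 := hlk
    show y * l * k = y
    rw [mul_assoc, hlk', mul_one]
  · rintro y ⟨p, hp, k', hk', rfl⟩
    rw [Set.mem_singleton_iff] at hk'
    rw [hk']
    have : p * k ∈ (K * L) * K := Set.mul_mem_mul hp hk
    rwa [hKLK] at this

lemma aux_coset_props {H : Subgroup G} {x : G} (hHc : IsCompact (H : Set G)) :
    ({x⁻¹} * (H : Set G)).Nonempty ∧ IsCompact ({x⁻¹} * (H : Set G)) ∧
      ((H : Set G) * {x}) * ({x⁻¹} * (H : Set G)) * ((H : Set G) * {x}) = (H : Set G) * {x} ∧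
      ({x⁻¹} * (H : Set G)) * ((H : Set G) * {x}) * ({x⁻¹} * (H : Set G))
        = {x⁻¹} * (H : Set G) := by
  have hsingle : ({x} : Set G) * {x⁻¹} = 1 := by
    rw [Set.singleton_mul_singleton, mul_inv_cancel, Set.singleton_one]
  have hHH : (H : Set G) * (H : Set G) = (H : Set G) := coe_mul_coe H
  refine ⟨⟨x⁻¹ * 1, Set.mul_mem_mul rfl H.one_mem⟩, isCompact_singleton.mul hHc, ?_, ?_⟩
  · calc ((H : Set G) * {x}) * ({x⁻¹} * (H : Set G)) * ((H : Set G) * {x})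
        = (H : Set G) * (({x} * {x⁻¹}) * ((H : Set G) * (H : Set G))) * {x} := by
          simp only [mul_assoc]
      _ = (H : Set G) * {x} := by rw [hsingle, hHH, one_mul, hHH]
  · calc ({x⁻¹} * (H : Set G)) * ((H : Set G) * {x}) * ({x⁻¹} * (H : Set G))
        = {x⁻¹} * ((H : Set G) * (H : Set G) * (({x} * {x⁻¹}) * (H : Set G))) := by
          simp only [mul_assoc]
      _ = {x⁻¹} * (H : Set G) := by rw [hsingle, hHH, one_mul, hHH]

lemma aux_unique {H : Subgroup G} {x : G} {L : Set G} (hLne : L.Nonempty)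
    (hKLK : ((H : Set G) * {x}) * L * ((H : Set G) * {x}) = (H : Set G) * {x})
    (hLKL : L * ((H : Set G) * {x}) * L = L) :
    L = {x⁻¹} * (H : Set G) := by
  have hxK : x ∈ (H : Set G) * {x} := ⟨1, H.one_mem, x, rfl, one_mul x⟩
  have hsub : L ⊆ {x⁻¹} * (H : Set G) := by
    intro l hl
    have hmem : x * l * x ∈ (H : Set G) * {x} := by
      rw [← hKLK]
      exact Set.mul_mem_mul (Set.mul_mem_mul hxK hl) hxK
    obtain ⟨h, hh, x', hx', heq⟩ := hmem
    rw [Set.mem_singleton_iff] at hx'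
    rw [hx'] at heq
    refine ⟨x⁻¹, rfl, h, hh, ?_⟩
    have := mul_right_cancel heq
    calc x⁻¹ * h = x⁻¹ * (x * l) := by rw [← this]
      _ = l := by group
  refine Set.Subset.antisymm hsub ?_
  obtain ⟨l₀, hl₀⟩ := hLne
  obtain ⟨xi, hxi, m₀, hm₀, hl₀eq⟩ := hsub hl₀
  rw [Set.mem_singleton_iff] at hxi
  rw [hxi] at hl₀eq
  rintro y ⟨xj, hxj, h, hh, rfl⟩
  rw [Set.mem_singleton_iff] at hxj
  rw [hxj]
  have hk : (m₀⁻¹ * h * m₀⁻¹) * x ∈ (H : Set G) * {x} :=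
    Set.mul_mem_mul (H.mul_mem (H.mul_mem (H.inv_mem hm₀) hh) (H.inv_mem hm₀)) rfl
  have hmem : l₀ * ((m₀⁻¹ * h * m₀⁻¹) * x) * l₀ ∈ L := by
    rw [← hLKL]
    exact Set.mul_mem_mul (Set.mul_mem_mul hl₀ hk) hl₀
  have heq : l₀ * ((m₀⁻¹ * h * m₀⁻¹) * x) * l₀ = x⁻¹ * h := by
    rw [← hl₀eq]; group
  rwa [heq] at hmem

end aux

/-- For a nonempty compact subset `K` of a Hausdorff topological group the following are
equivalent: `K` is a regular element of `exp G`; `K` is uniquely invertible in `exp G`;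
`K` is a right coset `H * {x}` of a compact subgroup `H`. -/
theorem regular_iff_uniquely_invertible_iff_coset {G : Type*} [Group G] [TopologicalSpace G]
    [IsTopologicalGroup G] [T2Space G] {K : Set G} (hne : K.Nonempty) (hcomp : IsCompact K) :
    ((∃ L : Set G, L.Nonempty ∧ IsCompact L ∧ K * L * K = K) ↔
      (∃! L : Set G, L.Nonempty ∧ IsCompact L ∧ K * L * K = K ∧ L * K * L = L)) ∧
    ((∃ L : Set G, L.Nonempty ∧ IsCompact L ∧ K * L * K = K) ↔
      (∃ (H : Subgroup G) (x : G), IsCompact (H : Set G) ∧ K = (H : Set G) * {x})) := by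
  have h13 := aux_reg_to_coset hne hcomp
  have h31 : (∃ (H : Subgroup G) (x : G), IsCompact (H : Set G) ∧ K = (H : Set G) * {x}) →
      ∃ L : Set G, L.Nonempty ∧ IsCompact L ∧ K * L * K = K := by
    rintro ⟨H, x, hHc, rfl⟩
    obtain ⟨h1, h2, h3, -⟩ := aux_coset_props (x := x) hHc
    exact ⟨_, h1, h2, h3⟩
  have h32 : (∃ (H : Subgroup G) (x : G), IsCompact (H : Set G) ∧ K = (H : Set G) * {x}) →
      ∃! L : Set G, L.Nonempty ∧ IsCompact L ∧ K * L * K = K ∧ L * K * L = L := by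
    rintro ⟨H, x, hHc, rfl⟩
    obtain ⟨h1, h2, h3, h4⟩ := aux_coset_props (x := x) hHc
    exact ⟨_, ⟨h1, h2, h3, h4⟩, fun L ⟨hLne, _, hKLK, hLKL⟩ => aux_unique hLne hKLK hLKL⟩
  refine ⟨⟨fun h => h32 (h13 h), ?_⟩, h13, h31⟩
  rintro ⟨L, ⟨hLne, hLc, hKLK, -⟩, -⟩
  exact ⟨L, hLne, hLc, hKLK⟩
end

section
/- If μ and ν are Radon probability measures on a Hausdorff topological group G satisfying μ∗ν∗μ = μ, then the supports S_μ and S_ν are compact subsets of G; moreover, the support of the idempotent measure μ∗ν is a compact subgroup H of G and S_μ = H·x for some x ∈ G. -/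
open MeasureTheory Set Pointwise Topology
open scoped ENNReal NNReal
set_option linter.unusedSectionVars false

/-- A Radon probability measure: a Borel probability measure such that for every `ε > 0`
there is a compact set of measure `> 1 - ε`. -/
def IsRadonProb {G : Type*} [TopologicalSpace G] [MeasurableSpace G]
    (μ : Measure G) : Prop :=
  μ Set.univ = 1 ∧ ∀ ε : ℝ, 0 < ε → ∃ K : Set G, IsCompact K ∧ 1 - ENNReal.ofReal ε < μ K

/-- Convolution of measures: the pushforward of the product measure under multiplication. -/
noncomputable def mconv {G : Type*} [MeasurableSpace G] [Mul G]
    (μ ν : Measure G) : Measure G :=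
  (μ.prod ν).map (fun p : G × G => p.1 * p.2)

/-- The support of a measure: all points whose every open neighbourhood has positive measure. -/
def msupport {G : Type*} [TopologicalSpace G] [MeasurableSpace G] (μ : Measure G) : Set G :=
  {x | ∀ U : Set G, IsOpen U → x ∈ U → 0 < μ U}

/-- The space of Radon probability measures on `G`. -/
def PM (G : Type*) [TopologicalSpace G] [MeasurableSpace G] : Type _ :=
  {μ : Measure G // IsRadonProb μ}

/-- The weak topology on `PM G`, generated by the sub-basic sets `{μ | μ U > a}`
for `U ⊆ G` open and `a : ℝ`. -/
instance PM.topologicalSpace (G : Type*) [TopologicalSpace G] [MeasurableSpace G] :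
    TopologicalSpace (PM G) :=
  TopologicalSpace.generateFrom
    {s | ∃ (U : Set G) (a : ℝ), IsOpen U ∧ s = {μ : PM G | ENNReal.ofReal a < μ.1 U}}

section Aux

variable {G : Type*}

/- ### Generalities -/

lemma IsRadonProb.prob {_ : TopologicalSpace G} {_ : MeasurableSpace G} {μ : Measure G}
    (hμ : IsRadonProb μ) : IsProbabilityMeasure μ := ⟨hμ.1⟩

lemma isClosed_msupport {_ : TopologicalSpace G} {_ : MeasurableSpace G} (μ : Measure G) :
    IsClosed (msupport μ) := by
  rw [← isOpen_compl_iff, isOpen_iff_forall_mem_open]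
  intro x hx
  simp only [msupport, mem_compl_iff, mem_setOf_eq, not_forall] at hx
  obtain ⟨U, hU, hxU, hU0⟩ := hx
  refine ⟨U, fun y hy hyS => ?_, hU, hxU⟩
  exact hU0 (hyS U hU hy)

/-- If a closed set has null complement, it contains the support. -/
lemma msupport_subset_of_compl_null {_ : TopologicalSpace G} {_ : MeasurableSpace G}
    {μ : Measure G} {C : Set G} (hC : IsClosed C) (h0 : μ Cᶜ = 0) :
    msupport μ ⊆ C := by
  intro x hx
  by_contra hxC
  have := hx Cᶜ hC.isOpen_compl hxC
  simp [h0] at this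

lemma msupport_nonempty {_ : TopologicalSpace G} {_ : MeasurableSpace G} {μ : Measure G}
    (hμ : IsRadonProb μ) : (msupport μ).Nonempty := by
  obtain ⟨K, hK, hKm⟩ := hμ.2 (1/2) (by norm_num)
  have hKpos : 0 < μ K := lt_of_le_of_lt zero_le hKm
  by_contra h
  rw [Set.not_nonempty_iff_eq_empty] at h
  -- every point of K has a null open neighbourhood
  have hcov : ∀ x ∈ K, ∃ U : Set G, IsOpen U ∧ x ∈ U ∧ μ U = 0 := by
    intro x _
    have hx : x ∉ msupport μ := by rw [h]; exact notMem_empty x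
    simp only [msupport, mem_setOf_eq, not_forall] at hx
    obtain ⟨U, hU, hxU, hU0⟩ := hx
    exact ⟨U, hU, hxU, by simpa using hU0⟩
  choose U hUopen hxU hU0 using hcov
  obtain ⟨t, ht⟩ := hK.elim_nhds_subcover' (fun x hx => U x hx)
    (fun x hx => (hUopen x hx).mem_nhds (hxU x hx))
  have : μ K = 0 := by
    refine measure_mono_null ht ?_
    refine le_antisymm (le_trans (measure_biUnion_finset_le _ _) ?_) zero_le
    simp [hU0]
  exact absurd this hKpos.ne'

/- ### Convolution basics -/

variable [Group G]

section MeasOnly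

variable {mG : MeasurableSpace G} [MeasurableMul₂ G]

lemma mconv_apply (μ ν : Measure G) {s : Set G} (hs : MeasurableSet s) :
    mconv μ ν s = (μ.prod ν) ((fun p : G × G => p.1 * p.2) ⁻¹' s) :=
  Measure.map_apply measurable_mul hs

lemma mconv_assoc (μ ν ρ : Measure G) [SFinite μ] [SFinite ν] [SFinite ρ] :
    mconv (mconv μ ν) ρ = mconv μ (mconv ν ρ) := by
  have hm : Measurable (fun p : G × G => p.1 * p.2) := measurable_mul
  have hL : mconv (mconv μ ν) ρ =
      Measure.map (fun p : (G × G) × G => p.1.1 * p.1.2 * p.2) ((μ.prod ν).prod ρ) := by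
    unfold mconv
    conv_lhs => rw [show ρ = Measure.map id ρ from (Measure.map_id).symm]
    rw [Measure.map_prod_map _ _ hm measurable_id,
      Measure.map_map hm (hm.prodMap measurable_id)]
    rfl
  have hR : mconv μ (mconv ν ρ) =
      Measure.map (fun p : G × G × G => p.1 * (p.2.1 * p.2.2)) (μ.prod (ν.prod ρ)) := by
    unfold mconv
    conv_lhs => rw [show μ = Measure.map id μ from (Measure.map_id).symm]
    rw [Measure.map_prod_map _ _ measurable_id hm,
      Measure.map_map hm (measurable_id.prodMap hm)]
    rfl
  rw [hL, hR, ← Measure.prodAssoc_prod,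
    Measure.map_map (g := fun p : G × G × G => p.1 * (p.2.1 * p.2.2)) (measurable_fst.mul (measurable_snd.fst.mul measurable_snd.snd))
      MeasurableEquiv.prodAssoc.measurable]
  · congr 1
    ext p
    simp [MeasurableEquiv.prodAssoc, mul_assoc]

lemma mconv_univ (μ ν : Measure G) [IsProbabilityMeasure μ] [IsProbabilityMeasure ν] :
    mconv μ ν Set.univ = 1 := by
  rw [mconv_apply μ ν MeasurableSet.univ]
  simp

end MeasOnly

section TopMeas

variable [TopologicalSpace G] [IsTopologicalGroup G] [T2Space G]
  {mG : MeasurableSpace G} [BorelSpace G] [MeasurableMul₂ G]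

lemma msupport_mul_subset (μ ν : Measure G) [SFinite μ] [SFinite ν] :
    msupport μ * msupport ν ⊆ msupport (mconv μ ν) := by
  rintro z ⟨x, hx, y, hy, rfl⟩
  intro U hU hxyU
  obtain ⟨V, W, hV, hW, hxV, hyW, hVW⟩ :=
    isOpen_prod_iff.mp (hU.preimage continuous_mul) x y hxyU
  have h1 : (μ.prod ν) (V ×ˢ W) ≤ mconv μ ν U := by
    rw [mconv_apply μ ν hU.measurableSet]
    exact measure_mono hVW
  rw [Measure.prod_prod] at h1
  exact lt_of_lt_of_le (ENNReal.mul_pos (hx V hV hxV).ne' (hy W hW hyW).ne') h1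

/-- Tightness: complements of compacts are small. -/
lemma IsRadonProb.compl_small {μ : Measure G} (hμ : IsRadonProb μ) {ε : ℝ} (hε : 0 < ε) :
    ∃ K : Set G, IsCompact K ∧ μ Kᶜ < ENNReal.ofReal ε := by
  have hprob := hμ.prob
  have hd : (0:ℝ) < min ε 1 / 2 := by positivity
  obtain ⟨K, hK, hKm⟩ := hμ.2 _ hd
  refine ⟨K, hK, ?_⟩
  have hKc : μ Kᶜ = 1 - μ K := prob_compl_eq_one_sub hK.isClosed.measurableSet
  have hle : ENNReal.ofReal (min ε 1 / 2) ≤ 1 := by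
    rw [← ENNReal.ofReal_one]
    apply ENNReal.ofReal_le_ofReal
    have := min_le_right ε 1; linarith
  calc μ Kᶜ = 1 - μ K := hKc
    _ ≤ 1 - (1 - ENNReal.ofReal (min ε 1 / 2)) := tsub_le_tsub_left hKm.le 1
    _ = ENNReal.ofReal (min ε 1 / 2) := ENNReal.sub_sub_cancel ENNReal.one_ne_top hle
    _ < ENNReal.ofReal ε := by
        rw [ENNReal.ofReal_lt_ofReal_iff hε]
        have h1 := min_le_left ε 1
        have h2 : 0 < min ε 1 := lt_min hε one_pos
        linarith

/-- From small complement to the `IsRadonProb` form of tightness. -/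
lemma prob_lt_of_compl_lt {μ : Measure G} [IsProbabilityMeasure μ] {s : Set G}
    (hs : MeasurableSet s) {ε : ℝ≥0∞} (h : μ sᶜ < ε) (h2 : μ sᶜ < 1) :
    1 - ε < μ s := by
  have hadd : μ s + μ sᶜ = 1 := by rw [measure_add_measure_compl hs]; simp
  rcases le_or_gt ε 1 with hε1 | hε1
  · have h1 : (1:ℝ≥0∞) < μ s + ε := by
      rw [← hadd]
      exact ENNReal.add_lt_add_left (measure_ne_top μ s) h
    exact ENNReal.sub_lt_of_lt_add hε1 h1
  · rw [tsub_eq_zero_of_le hε1.le]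
    have : μ s = 1 - μ sᶜ := ENNReal.eq_sub_of_add_eq (measure_ne_top μ sᶜ) hadd
    rw [this]
    exact tsub_pos_iff_lt.mpr h2

lemma mconv_isRadonProb {μ ν : Measure G} (hμ : IsRadonProb μ) (hν : IsRadonProb ν) :
    IsRadonProb (mconv μ ν) := by
  have hpμ := hμ.prob; have hpν := hν.prob
  haveI : IsProbabilityMeasure (mconv μ ν) := ⟨mconv_univ μ ν⟩
  refine ⟨mconv_univ μ ν, fun ε hε => ?_⟩
  have hd : (0:ℝ) < min (ε/2) (1/4) := by positivity
  obtain ⟨K, hK, hKs⟩ := hμ.compl_small hd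
  obtain ⟨L, hL, hLs⟩ := hν.compl_small hd
  refine ⟨K * L, hK.mul hL, ?_⟩
  have hmeas : MeasurableSet (K * L) := (hK.mul hL).isClosed.measurableSet
  have hsub : ((fun p : G × G => p.1 * p.2) ⁻¹' (K * L))ᶜ ⊆
      (Kᶜ ×ˢ (univ : Set G)) ∪ ((univ : Set G) ×ˢ Lᶜ) := by
    rintro ⟨a, b⟩ hab
    by_contra h
    simp only [mem_union, mem_prod, mem_compl_iff, mem_univ, and_true, true_and,
      not_or, not_not] at h
    exact hab (Set.mul_mem_mul h.1 h.2)
  have hbound : mconv μ ν (K * L)ᶜ < ENNReal.ofReal (2 * min (ε/2) (1/4)) := by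
    rw [mconv_apply μ ν hmeas.compl]
    calc (μ.prod ν) (((fun p : G × G => p.1 * p.2) ⁻¹' (K * L))ᶜ)
        ≤ (μ.prod ν) (Kᶜ ×ˢ (univ : Set G)) + (μ.prod ν) ((univ : Set G) ×ˢ Lᶜ) :=
          le_trans (measure_mono hsub) (measure_union_le _ _)
      _ = μ Kᶜ + ν Lᶜ := by rw [Measure.prod_prod, Measure.prod_prod]; simp
      _ < ENNReal.ofReal (min (ε/2) (1/4)) + ENNReal.ofReal (min (ε/2) (1/4)) :=
          ENNReal.add_lt_add hKs hLs
      _ = ENNReal.ofReal (2 * min (ε/2) (1/4)) := by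
          rw [← ENNReal.ofReal_add hd.le hd.le]; ring_nf
  have hb2 : mconv μ ν (K * L)ᶜ < ENNReal.ofReal ε := by
    refine lt_of_lt_of_le hbound (ENNReal.ofReal_le_ofReal ?_)
    have := min_le_left (ε/2) (1/4); linarith
  have hb3 : mconv μ ν (K * L)ᶜ < 1 := by
    refine lt_of_lt_of_le hbound ?_
    rw [← ENNReal.ofReal_one]
    apply ENNReal.ofReal_le_ofReal
    have := min_le_right (ε/2) (1/4); linarith
  exact prob_lt_of_compl_lt hmeas hb2 hb3

end TopMeas


/- ### The square identity in `ℝ≥0∞` -/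

lemma enn_sq_identity (a b : ℝ≥0∞) (ha : a ≠ ⊤) (hb : b ≠ ⊤) :
    a * a + b * b = 2 * (a * b) + ((a - b) * (a - b) + (b - a) * (b - a)) := by
  lift a to ℝ≥0 using ha
  lift b to ℝ≥0 using hb
  have base : ∀ x y : ℝ≥0, x ≤ y →
      x * x + y * y = 2 * (x * y) + ((x - y) * (x - y) + (y - x) * (y - x)) := by
    intro x y hxy
    obtain ⟨d, rfl⟩ : ∃ d, y = x + d := ⟨y - x, (add_tsub_cancel_of_le hxy).symm⟩
    rw [tsub_eq_zero_of_le le_self_add, add_tsub_cancel_left]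
    ring
  have key : ∀ x y : ℝ≥0,
      x * x + y * y = 2 * (x * y) + ((x - y) * (x - y) + (y - x) * (y - x)) := by
    intro x y
    rcases le_total x y with h | h
    · exact base x y h
    · have := base y x h
      rw [mul_comm y x, add_comm (y * y), add_comm ((y - x) * (y - x))] at this
      exact this
  exact_mod_cast key a b

section IdemCompact

variable [TopologicalSpace G] [IsTopologicalGroup G] [T2Space G]
  {mG : MeasurableSpace G} [BorelSpace G] [MeasurableMul₂ G]

/-- The support of a tight idempotent probability measure is compact. -/
lemma msupport_compact_of_idem {ω : Measure G} (hω : IsRadonProb ω)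
    (hidem : mconv ω ω = ω) : IsCompact (msupport ω) := by
  haveI := hω.prob
  -- a compact set of measure > 3/4
  obtain ⟨K, hK, hKs⟩ := hω.compl_small (ε := 1/4) (by norm_num)
  have hKm : MeasurableSet K := hK.isClosed.measurableSet
  have h34 : (1:ℝ≥0∞) - ENNReal.ofReal (1/4) = ENNReal.ofReal (3/4) := by
    rw [← ENNReal.ofReal_one, ← ENNReal.ofReal_sub _ (by norm_num)]
    norm_num
  have hK34 : ENNReal.ofReal (3/4) < ω K := by
    rw [← h34]
    exact prob_lt_of_compl_lt hKm hKs
      (lt_of_lt_of_le hKs (by rw [← ENNReal.ofReal_one]; exact ENNReal.ofReal_le_ofReal (by norm_num)))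
  -- the harmonic function f
  set f : G → ℝ≥0∞ := fun x => ω {z | x * z ∈ K} with hfdef
  have hmulK : MeasurableSet {p : G × G | p.1 * p.2 ∈ K} := measurable_mul hKm
  have hf : Measurable f := measurable_measure_prodMk_left hmulK
  have hfne : ∀ x, f x ≠ ⊤ := fun x => measure_ne_top ω _
  have hsect : ∀ x : G, MeasurableSet {z : G | x * z ∈ K} := fun x =>
    (measurable_const_mul x) hKm
  -- harmonicity
  have hI1 : ∀ x : G, f x = ∫⁻ y, f (x * y) ∂ω := by
    intro x
    calc f x = mconv ω ω {z | x * z ∈ K} := by rw [hidem]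
      _ = (ω.prod ω) ((fun p : G × G => p.1 * p.2) ⁻¹' {z | x * z ∈ K}) :=
          mconv_apply _ _ (hsect x)
      _ = ∫⁻ y, ω (Prod.mk y ⁻¹' ((fun p : G × G => p.1 * p.2) ⁻¹' {z | x * z ∈ K})) ∂ω :=
          Measure.prod_apply (measurable_mul (hsect x))
      _ = ∫⁻ y, f (x * y) ∂ω := by
          congr 1; funext y
          congr 1; ext z
          simp [Set.preimage, mul_assoc]
  have hI2 : ∫⁻ x, f x ∂ω = ω K := by
    calc ∫⁻ x, f x ∂ω
        = ∫⁻ x, ω (Prod.mk x ⁻¹' {p : G × G | p.1 * p.2 ∈ K}) ∂ω := rfl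
      _ = (ω.prod ω) {p : G × G | p.1 * p.2 ∈ K} := (Measure.prod_apply hmulK).symm
      _ = mconv ω ω K := (mconv_apply _ _ hKm).symm
      _ = ω K := by rw [hidem]
  -- second moment computations
  set J := ∫⁻ x, f x * f x ∂ω with hJdef
  have hJle : J ≤ 1 := by
    calc J ≤ ∫⁻ _, 1 ∂ω := lintegral_mono (fun x =>
        le_trans (mul_le_mul' (measure_mono (subset_univ _)) (measure_mono (subset_univ _)))
          (by simp [measure_univ]))
      _ = 1 := by simp
  have hJne : J ≠ ⊤ := (lt_of_le_of_lt hJle ENNReal.one_lt_top).ne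
  have hmP : Measurable fun p : G × G => f p.1 := hf.comp measurable_fst
  have hmQ : Measurable fun p : G × G => f (p.1 * p.2) := hf.comp measurable_mul
  have hA : ∫⁻ p, f p.1 * f p.1 ∂(ω.prod ω) = J := by
    rw [lintegral_prod _ (show Measurable fun p : G × G => f p.1 * f p.1 from hmP.mul hmP).aemeasurable]
    simp [lintegral_const, measure_univ]
    rfl
  have hB : ∫⁻ p, f (p.1 * p.2) * f (p.1 * p.2) ∂(ω.prod ω) = J := by
    have hmap : (ω.prod ω).map (fun p : G × G => p.1 * p.2) = ω := hidem
    calc ∫⁻ p, f (p.1 * p.2) * f (p.1 * p.2) ∂(ω.prod ω)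
        = ∫⁻ t, f t * f t ∂((ω.prod ω).map (fun p : G × G => p.1 * p.2)) :=
          (lintegral_map (hf.mul hf) measurable_mul).symm
      _ = J := by rw [hmap]
  have hC : ∫⁻ p, f p.1 * f (p.1 * p.2) ∂(ω.prod ω) = J := by
    rw [lintegral_prod _ (show Measurable fun p : G × G => f p.1 * f (p.1 * p.2) from hmP.mul hmQ).aemeasurable]
    have hinner : ∀ x, ∫⁻ y, f x * f (x * y) ∂ω = f x * f x := by
      intro x
      have h := lintegral_const_mul (μ := ω) (f x) (hf.comp (measurable_const_mul x))
      simp only [Function.comp_apply] at h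
      rw [h, ← hI1 x]
    simp only [hinner]
    rfl
  -- the defect function q
  set q : G × G → ℝ≥0∞ := fun p =>
    (f p.1 - f (p.1 * p.2)) * (f p.1 - f (p.1 * p.2)) +
    (f (p.1 * p.2) - f p.1) * (f (p.1 * p.2) - f p.1) with hqdef
  have hmq : Measurable q :=
    ((hmP.sub hmQ).mul (hmP.sub hmQ)).add ((hmQ.sub hmP).mul (hmQ.sub hmP))
  have hqzero : ∫⁻ p, q p ∂(ω.prod ω) = 0 := by
    have hident : (fun p : G × G => f p.1 * f p.1 + f (p.1 * p.2) * f (p.1 * p.2)) =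
        fun p => 2 * (f p.1 * f (p.1 * p.2)) + q p := by
      funext p
      exact enn_sq_identity _ _ (hfne _) (hfne _)
    have hsum : ∫⁻ p, (f p.1 * f p.1 + f (p.1 * p.2) * f (p.1 * p.2)) ∂(ω.prod ω) = J + J := by
      rw [lintegral_add_left (show Measurable fun p : G × G => f p.1 * f p.1 from hmP.mul hmP), hA, hB]
    have hsum2 : ∫⁻ p, (2 * (f p.1 * f (p.1 * p.2)) + q p) ∂(ω.prod ω) =
        J + J + ∫⁻ p, q p ∂(ω.prod ω) := by
      rw [lintegral_add_left (show Measurable fun p : G × G => 2 * (f p.1 * f (p.1 * p.2)) from measurable_const.mul (hmP.mul hmQ)),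
        lintegral_const_mul _ (show Measurable fun p : G × G => f p.1 * f (p.1 * p.2) from hmP.mul hmQ), hC, two_mul]
    rw [hident, hsum2] at hsum
    have h0 : J + J + ∫⁻ p, q p ∂(ω.prod ω) = J + J + 0 := by simpa using hsum
    exact (ENNReal.add_right_inj (by finiteness)).mp h0
  -- a.e. equality of f p.1 and f (p.1 * p.2)
  have hqae : ∀ᵐ p ∂(ω.prod ω), q p = 0 := (lintegral_eq_zero_iff hmq).mp hqzero
  have hNnull : (ω.prod ω) {p : G × G | f p.1 ≠ f (p.1 * p.2)} = 0 := by
    refine measure_mono_null ?_ (ae_iff.mp hqae)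
    intro p hp
    simp only [mem_setOf_eq] at hp ⊢
    intro hq0
    obtain ⟨h1, h2⟩ := add_eq_zero.mp hq0
    exact hp (le_antisymm (tsub_eq_zero_iff_le.mp (mul_self_eq_zero.mp h1))
      (tsub_eq_zero_iff_le.mp (mul_self_eq_zero.mp h2)))
  have hsectnull : (fun x => ω (Prod.mk x ⁻¹' {p : G × G | f p.1 ≠ f (p.1 * p.2)})) =ᵐ[ω] 0 :=
    Measure.measure_ae_null_of_prod_null hNnull
  -- the set of points where f is not small has positive measure
  set E := {x : G | ENNReal.ofReal (1/4) < f x} with hEdef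
  have hEpos : 0 < ω E := by
    by_contra h
    push_neg at h
    have hE0 : ω E = 0 := le_antisymm h zero_le
    have hae : ∀ᵐ x ∂ω, f x ≤ ENNReal.ofReal (1/4) := by
      rw [ae_iff]
      convert hE0 using 2
      ext x
      simp only [hEdef, mem_setOf_eq, not_le]
    have : ∫⁻ x, f x ∂ω ≤ ENNReal.ofReal (1/4) := by
      calc ∫⁻ x, f x ∂ω ≤ ∫⁻ _, ENNReal.ofReal (1/4) ∂ω := lintegral_mono_ae hae
        _ = ENNReal.ofReal (1/4) := by simp
    rw [hI2] at this
    have h14 : ENNReal.ofReal (1/4) < ENNReal.ofReal (3/4) := by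
      rw [ENNReal.ofReal_lt_ofReal_iff (by norm_num)]; norm_num
    exact absurd (lt_of_lt_of_le (lt_trans h14 hK34) this) (lt_irrefl _)
  -- pick a good point x₀
  have hex : ∃ x₀, x₀ ∈ E ∧ ω (Prod.mk x₀ ⁻¹' {p : G × G | f p.1 ≠ f (p.1 * p.2)}) = 0 := by
    by_contra h
    push_neg at h
    have hsub : E ⊆ {x | ω (Prod.mk x ⁻¹' {p : G × G | f p.1 ≠ f (p.1 * p.2)}) ≠ 0} :=
      fun x hx => h x hx
    have : ω E = 0 := measure_mono_null hsub (by
      have := ae_iff.mp hsectnull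
      simpa using this)
    exact absurd this hEpos.ne'
  obtain ⟨x₀, hx₀E, hx₀null⟩ := hex
  -- the trapping compact set
  set C := (fun g => x₀⁻¹ * g) '' (K * K⁻¹) with hCdef
  have hCcomp : IsCompact C := (hK.mul hK.inv).image (continuous_const.mul continuous_id)
  have hCsub : (Prod.mk x₀ ⁻¹' {p : G × G | f p.1 ≠ f (p.1 * p.2)})ᶜ ⊆ C := by
    intro z hz
    simp only [mem_compl_iff, mem_preimage, mem_setOf_eq, not_not] at hz
    -- hz : f x₀ = f (x₀ * z)
    have hfz : ENNReal.ofReal (1/4) < f (x₀ * z) := by rw [← hz]; exact hx₀E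
    have hinter : ω ({w | (x₀ * z) * w ∈ K} ∩ K) ≠ 0 := by
      intro h0
      have husum := measure_union_add_inter {w | (x₀ * z) * w ∈ K} hKm (μ := ω)
      rw [h0, add_zero] at husum
      have hgt : 1 < ω ({w | (x₀ * z) * w ∈ K} ∪ K) := by
        rw [husum]
        calc (1:ℝ≥0∞) = ENNReal.ofReal (1/4) + ENNReal.ofReal (3/4) := by
              rw [← ENNReal.ofReal_add (by norm_num) (by norm_num), ← ENNReal.ofReal_one]
              norm_num
          _ < f (x₀ * z) + ω K := ENNReal.add_lt_add hfz hK34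
      exact absurd hgt (not_lt.mpr prob_le_one)
    obtain ⟨w, hw1, hw2⟩ := nonempty_of_measure_ne_zero hinter
    refine ⟨(x₀ * z) * w * w⁻¹, Set.mul_mem_mul hw1 (Set.inv_mem_inv.mpr hw2), ?_⟩
    group
  have hCnull : ω Cᶜ = 0 := by
    refine measure_mono_null ?_ hx₀null
    intro z hz
    by_contra hzn
    exact hz (hCsub hzn)
  exact hCcomp.of_isClosed_subset (isClosed_msupport ω)
    (msupport_subset_of_compl_null hCcomp.isClosed hCnull)

end IdemCompact


section Semigroup

variable [TopologicalSpace G] [IsTopologicalGroup G] [T2Space G]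

/-- In a compact subsemigroup, powers of an element come back near `1`. -/
lemma pow_approx_one {S : Set G} (hcomp : IsCompact S)
    (hmul : ∀ x ∈ S, ∀ y ∈ S, x * y ∈ S) {a : G} (ha : a ∈ S) :
    ∀ V : Set G, IsOpen V → (1:G) ∈ V → ∃ k, 1 ≤ k ∧ a ^ k ∈ V := by
  have hpow : ∀ n : ℕ, a ^ (n + 1) ∈ S := by
    intro n
    induction n with
    | zero => simpa using ha
    | succ n ih => rw [pow_succ]; exact hmul _ ih _ ha
  intro V hV h1V
  obtain ⟨c, hcS, hc⟩ := hcomp.exists_mapClusterPt (f := Filter.atTop)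
    (u := fun n : ℕ => a ^ (n + 1))
    (Filter.le_principal_iff.mpr (Filter.mem_map.mpr
      (Filter.Eventually.of_forall hpow)))
  have hcont : Continuous fun p : G × G => p.1⁻¹ * p.2 :=
    (continuous_fst.inv).mul continuous_snd
  have hmem : (fun p : G × G => p.1⁻¹ * p.2) ⁻¹' V ∈ 𝓝 (c, c) := by
    apply hcont.continuousAt.preimage_mem_nhds
    simpa using hV.mem_nhds h1V
  rw [mem_nhds_prod_iff] at hmem
  obtain ⟨U₁, hU₁, U₂, hU₂, hsub⟩ := hmem
  have hU : U₁ ∩ U₂ ∈ 𝓝 c := Filter.inter_mem hU₁ hU₂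
  have hfreq : ∃ᶠ n in Filter.atTop, a ^ (n + 1) ∈ U₁ ∩ U₂ :=
    mapClusterPt_iff_frequently.mp hc _ hU
  obtain ⟨m, -, hm⟩ := Filter.frequently_atTop.mp hfreq 0
  obtain ⟨n, hnm, hn⟩ := Filter.frequently_atTop.mp hfreq (m + 1)
  refine ⟨n - m, by omega, ?_⟩
  have hval : (a ^ (m + 1))⁻¹ * a ^ (n + 1) ∈ V :=
    hsub (Set.mk_mem_prod hm.1 hn.2)
  have hpoweq : a ^ (m + 1) * a ^ (n - m) = a ^ (n + 1) := by
    rw [← pow_add]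
    congr 1
    omega
  have : a ^ (n - m) = (a ^ (m + 1))⁻¹ * a ^ (n + 1) := by
    rw [← hpoweq]; group
  rwa [this]

/-- A nonempty compact closed subsemigroup of a topological group is a subgroup. -/
lemma compact_semigroup_group {S : Set G} (hcomp : IsCompact S) (hcl : IsClosed S)
    (hne : S.Nonempty) (hmul : ∀ x ∈ S, ∀ y ∈ S, x * y ∈ S) :
    (1:G) ∈ S ∧ ∀ x ∈ S, x⁻¹ ∈ S := by
  obtain ⟨a, ha⟩ := hne
  have hpow : ∀ b : G, b ∈ S → ∀ k, 1 ≤ k → b ^ k ∈ S := by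
    intro b hb k hk
    obtain ⟨n, rfl⟩ : ∃ n, k = n + 1 := ⟨k - 1, by omega⟩
    induction n with
    | zero => simpa using hb
    | succ n ih => rw [pow_succ]; exact hmul _ (ih (by omega)) _ hb
  have h1 : (1:G) ∈ S := by
    rw [← hcl.closure_eq, mem_closure_iff]
    intro V hV h1V
    obtain ⟨k, hk, hkV⟩ := pow_approx_one hcomp hmul ha V hV h1V
    exact ⟨a ^ k, hkV, hpow a ha k hk⟩
  refine ⟨h1, fun x hx => ?_⟩
  rw [← hcl.closure_eq, mem_closure_iff]
  intro V hV hxV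
  have hWopen : IsOpen ((fun g => x⁻¹ * g) ⁻¹' V) := hV.preimage (continuous_const.mul continuous_id)
  have hW1 : (1:G) ∈ (fun g => x⁻¹ * g) ⁻¹' V := by simpa using hxV
  obtain ⟨k, hk, hkV⟩ := pow_approx_one hcomp hmul hx _ hWopen hW1
  refine ⟨x⁻¹ * x ^ k, hkV, ?_⟩
  have : x⁻¹ * x ^ k = x ^ (k - 1) := by
    obtain ⟨j, rfl⟩ : ∃ j, k = j + 1 := ⟨k - 1, by omega⟩
    simp [pow_succ']
  rw [this]
  rcases Nat.eq_or_lt_of_le hk with h | h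
  · simpa [← h] using h1
  · exact hpow x hx (k - 1) (by omega)

end Semigroup

end Aux

/-- If `μ ∗ ν ∗ μ = μ` for Radon probability measures on a Hausdorff topological group, then
the supports of `μ` and `ν` are compact, the support of the idempotent `μ ∗ ν` is a compact
subgroup `H`, and the support of `μ` is a right coset of `H`. -/
theorem supports_of_regular {G : Type*} [Group G] [TopologicalSpace G] [IsTopologicalGroup G]
    [T2Space G] [MeasurableSpace G] [BorelSpace G] [MeasurableMul₂ G]
    {μ ν : Measure G} (hμ : IsRadonProb μ) (hν : IsRadonProb ν)
    (hreg : mconv (mconv μ ν) μ = μ) :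
    IsCompact (msupport μ) ∧ IsCompact (msupport ν) ∧
      ∃ H : Subgroup G, IsCompact (H : Set G) ∧ msupport (mconv μ ν) = (H : Set G) ∧
        ∃ x : G, msupport μ = (H : Set G) * {x} := by
  haveI hpμ := hμ.prob
  haveI hpν := hν.prob
  have hωRadon : IsRadonProb (mconv μ ν) := mconv_isRadonProb hμ hν
  haveI := hωRadon.prob
  have hidem : mconv (mconv μ ν) (mconv μ ν) = mconv μ ν := by
    rw [← mconv_assoc (mconv μ ν) μ ν, hreg]
  obtain ⟨a, ha⟩ := msupport_nonempty hμ
  obtain ⟨b, hb⟩ := msupport_nonempty hν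
  have hS_comp : IsCompact (msupport (mconv μ ν)) := msupport_compact_of_idem hωRadon hidem
  have hS_cl : IsClosed (msupport (mconv μ ν)) := isClosed_msupport _
  have hSS : ∀ x ∈ msupport (mconv μ ν), ∀ y ∈ msupport (mconv μ ν),
      x * y ∈ msupport (mconv μ ν) := by
    intro x hx y hy
    have := msupport_mul_subset (mconv μ ν) (mconv μ ν) (Set.mul_mem_mul hx hy)
    rwa [hidem] at this
  obtain ⟨h1S, hinvS⟩ := compact_semigroup_group hS_comp hS_cl
    (msupport_nonempty hωRadon) hSS
  have hHA : ∀ x ∈ msupport (mconv μ ν), ∀ y ∈ msupport μ, x * y ∈ msupport μ := by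
    intro x hx y hy
    have := msupport_mul_subset (mconv μ ν) μ (Set.mul_mem_mul hx hy)
    rwa [hreg] at this
  have hABH : ∀ x ∈ msupport μ, ∀ y ∈ msupport ν, x * y ∈ msupport (mconv μ ν) :=
    fun x hx y hy => msupport_mul_subset μ ν (Set.mul_mem_mul hx hy)
  have hcoset : msupport μ = (msupport (mconv μ ν)) * {a} := by
    apply Set.Subset.antisymm
    · intro a' ha'
      have h1 : a' * b ∈ msupport (mconv μ ν) := hABH a' ha' b hb
      have h2 : a * b ∈ msupport (mconv μ ν) := hABH a ha b hb
      refine ⟨(a' * b) * (a * b)⁻¹, hSS _ h1 _ (hinvS _ h2), a, rfl, ?_⟩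
      group
    · rintro z ⟨h, hh, x, hx, rfl⟩
      rw [Set.mem_singleton_iff] at hx
      rw [hx]
      exact hHA h hh a ha
  have hμcomp : IsCompact (msupport μ) := by
    rw [hcoset, Set.mul_singleton]
    exact hS_comp.image (continuous_mul_right a)
  have hνcomp : IsCompact (msupport ν) := by
    have hsub : msupport ν ⊆ (fun g => a⁻¹ * g * a⁻¹) '' (msupport μ) := by
      intro y hy
      have h1 : a * y ∈ msupport (mconv μ ν) := hABH a ha y hy
      have h2 : (a * y) * a ∈ msupport μ := hHA _ h1 a ha
      exact ⟨a * y * a, h2, by group⟩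
    exact (hμcomp.image ((continuous_const.mul continuous_id).mul continuous_const)).of_isClosed_subset
      (isClosed_msupport ν) hsub
  refine ⟨hμcomp, hνcomp,
    { carrier := msupport (mconv μ ν)
      mul_mem' := fun hx hy => hSS _ hx _ hy
      one_mem' := h1S
      inv_mem' := fun hx => hinvS _ hx }, hS_comp, rfl, a, hcoset⟩
end

section
/- Let G be a Hausdorff topological group and let K, L be nonempty compact subsets of G with K·L·K = K and L·K·L = L. Then K·K = K if and only if (K·K·L)·(K·K·L) = K·K·L; that is, a regular element K of exp(G) is an idempotent if and only if K²·K⁻¹ is an idempotent, where K⁻¹ denotes the inverse of K in exp(G). -/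
open Set Pointwise Filter

/-- In a Hausdorff topological group, a nonempty compact set satisfying `S * S = S`
is closed under inversion. -/
lemma inv_mem_of_isCompact_mul_self {G : Type*} [Group G] [TopologicalSpace G]
    [IsTopologicalGroup G] [T2Space G] {S : Set G} (hSc : IsCompact S) (hSS : S * S = S)
    {s : G} (hs : s ∈ S) : s⁻¹ ∈ S := by
  have hmul : ∀ x ∈ S, ∀ y ∈ S, x * y ∈ S := fun x hx y hy => hSS ▸ Set.mul_mem_mul hx hy
  have hpow : ∀ n : ℕ, s ^ (n + 1) ∈ S := by
    intro n
    induction n with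
    | zero => simpa using hs
    | succ n ih => rw [pow_succ]; exact hmul _ ih _ hs
  set u : ℕ → G := fun n => s ^ (n + 1) with hu
  obtain ⟨a, haS, ha⟩ := hSc.exists_clusterPt (f := Filter.map u Filter.atTop)
    (le_principal_iff.2 (Filter.mem_map.2 (Filter.Eventually.of_forall fun n => hpow n)))
  have hfreq : ∀ U ∈ nhds a, ∃ᶠ n in Filter.atTop, u n ∈ U := mapClusterPt_iff_frequently.1 ha
  have hclosed : IsClosed S := hSc.isClosed
  rw [← hclosed.closure_eq, mem_closure_iff_nhds]
  intro U hU
  -- `(s⁻¹ * ·) ⁻¹' U` is a neighborhood of 1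
  have h1 : (fun x => s⁻¹ * x) ⁻¹' U ∈ nhds (1 : G) := by
    have hc : Continuous fun x : G => s⁻¹ * x := continuous_const.mul continuous_id
    apply hc.continuousAt.preimage_mem_nhds
    simpa using hU
  have hcont : Continuous fun p : G × G => p.1⁻¹ * p.2 :=
    (continuous_fst.inv).mul continuous_snd
  have h2 : (fun p : G × G => p.1⁻¹ * p.2) ⁻¹' ((fun x => s⁻¹ * x) ⁻¹' U)
      ∈ nhds ((1 : G), (1 : G)) := by
    apply hcont.continuousAt.preimage_mem_nhds
    simpa using h1
  rw [nhds_prod_eq, Filter.mem_prod_iff] at h2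
  obtain ⟨V₁, hV₁, V₂, hV₂, hV⟩ := h2
  have hVmem : V₁ ∩ V₂ ∈ nhds (1 : G) := Filter.inter_mem hV₁ hV₂
  have haV : (fun x => a⁻¹ * x) ⁻¹' (V₁ ∩ V₂) ∈ nhds a := by
    have hc : Continuous fun x : G => a⁻¹ * x := continuous_const.mul continuous_id
    apply hc.continuousAt.preimage_mem_nhds
    simpa using hVmem
  have hfr := Filter.frequently_atTop.1 (hfreq _ haV)
  obtain ⟨n, -, hn⟩ := hfr 0
  obtain ⟨m, hm, hmU⟩ := hfr (n + 2)
  obtain ⟨i, rfl⟩ : ∃ i, m = n + 2 + i := le_iff_exists_add.1 hm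
  set v₁ : G := a⁻¹ * u n with hv₁def
  set v₂ : G := a⁻¹ * u (n + 2 + i) with hv₂def
  have hv₁ : v₁ ∈ V₁ ∩ V₂ := hn
  have hv₂ : v₂ ∈ V₁ ∩ V₂ := hmU
  have hkey : s⁻¹ * (v₁⁻¹ * v₂) ∈ U := hV (Set.mk_mem_prod hv₁.1 hv₂.2)
  have hcalc : s⁻¹ * (v₁⁻¹ * v₂) = s ^ (i + 1) := by
    rw [hv₁def, hv₂def, hu]
    simp only [mul_inv_rev, inv_inv]
    have : s ^ (n + 2 + i + 1) = s ^ (n + 1) * (s * s ^ (i + 1)) := by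
      rw [← pow_succ', ← pow_add]; ring_nf
    rw [this]; group
  refine ⟨s ^ (i + 1), ?_, hpow i⟩
  rw [← hcalc]; exact hkey
/-- A regular element `K` of the semigroup `exp G` of nonempty compact subsets of a Hausdorff
topological group, with inverse `L`, is an idempotent iff `K² * K⁻¹ = K * K * L` is an
idempotent. -/
theorem idempotent_iff_sq_mul_inv_idempotent {G : Type*} [Group G] [TopologicalSpace G]
    [IsTopologicalGroup G] [T2Space G] {K L : Set G} (hKne : K.Nonempty) (hKc : IsCompact K)
    (hLne : L.Nonempty) (hLc : IsCompact L) (h1 : K * L * K = K) (h2 : L * K * L = L) :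
    K * K = K ↔ (K * K * L) * (K * K * L) = K * K * L := by
  constructor
  · intro h
    have hKL : K * K * L = K * L := by rw [h]
    rw [hKL]
    calc K * L * (K * L) = K * L * K * L := by rw [mul_assoc (K * L) K L]
      _ = K * L := by rw [h1]
  · intro hE
    set P := K * L with hPdef
    have hPP : P * P = P := by
      calc P * P = K * L * K * L := by rw [hPdef, mul_assoc (K * L) K L]
        _ = P := by rw [h1, hPdef]
    have hPc : IsCompact P := hKc.mul hLc
    have hPinv : ∀ p ∈ P, p⁻¹ ∈ P := fun p hp => inv_mem_of_isCompact_mul_self hPc hPP hp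
    have hPmul : ∀ x ∈ P, ∀ y ∈ P, x * y ∈ P := fun x hx y hy => hPP ▸ Set.mul_mem_mul hx hy
    have hPK : P * K = K := h1
    obtain ⟨l, hl⟩ := id hLne
    -- `K` is a coset of `P`:  K = P * {l⁻¹}
    have hKeq : K = P * {l⁻¹} := by
      apply Set.Subset.antisymm
      · intro k hk
        have h3 : k * l ∈ P := Set.mul_mem_mul hk hl
        have h4 : (k * l) * l⁻¹ ∈ P * {l⁻¹} := Set.mul_mem_mul h3 rfl
        simpa using h4
      · rintro x hx
        rw [Set.mem_mul] at hx
        obtain ⟨p, hp, y, hy, rfl⟩ := hx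
        rw [Set.mem_singleton_iff] at hy
        subst hy
        obtain ⟨k₀, hk₀⟩ := hKne
        have hp₀ : k₀ * l ∈ P := Set.mul_mem_mul hk₀ hl
        have h5 : (p * (k₀ * l)⁻¹) * k₀ ∈ P * K :=
          Set.mul_mem_mul (hPmul _ hp _ (hPinv _ hp₀)) hk₀
        rw [hPK] at h5
        have heq : (p * (k₀ * l)⁻¹) * k₀ = p * l⁻¹ := by group
        rwa [heq] at h5
    -- the idempotent `E = K*K*L = K*P` contains `1`
    have hEKP : K * K * L = K * P := by rw [hPdef, mul_assoc]
    have hEc : IsCompact (K * K * L) := (hKc.mul hKc).mul hLc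
    obtain ⟨x, hx⟩ : (K * K * L).Nonempty := (hKne.mul hKne).mul hLne
    have hxinv : x⁻¹ ∈ K * K * L := inv_mem_of_isCompact_mul_self hEc hE hx
    have hone : (1 : G) ∈ K * K * L := by
      have := Set.mul_mem_mul hx hxinv
      rw [hE] at this
      simpa using this
    rw [hEKP, Set.mem_mul] at hone
    obtain ⟨k, hk, p, hp, hkp⟩ := hone
    have hkP : k ∈ P := by
      have : k = p⁻¹ := eq_inv_of_mul_eq_one_left hkp
      exact this ▸ hPinv _ hp
    -- hence l⁻¹ ∈ P
    have hlP : l⁻¹ ∈ P := by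
      have := hKeq ▸ hk
      rw [Set.mem_mul] at this
      obtain ⟨q, hq, y, hy, hqy⟩ := this
      rw [Set.mem_singleton_iff] at hy
      subst hy
      have : l⁻¹ = q⁻¹ * k := by rw [← hqy]; group
      rw [this]
      exact hPmul _ (hPinv _ hq) _ hkP
    -- hence K = P and K is idempotent
    have hKP : K = P := by
      rw [hKeq]
      apply Set.Subset.antisymm
      · rintro x hx
        rw [Set.mem_mul] at hx
        obtain ⟨q, hq, y, hy, rfl⟩ := hx
        rw [Set.mem_singleton_iff] at hy
        subst hy
        exact hPmul _ hq _ hlP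
      · intro q hq
        have hlP' : l ∈ P := by simpa using hPinv _ hlP
        have h6 : (q * l) * l⁻¹ ∈ P * {l⁻¹} :=
          Set.mul_mem_mul (hPmul _ hq _ hlP') rfl
        simpa using h6
    rw [hKP, hPP]
end

section
/- Let μ and ν be Radon probability measures on a Hausdorff topological group G with μ∗ν = δ_1, the Dirac point mass at the identity element of G. Then there exists x ∈ G such that μ = δ_x and ν = δ_{x⁻¹}. -/
open MeasureTheory Set Pointwise Topology

private lemma mconv_eq_dirac_one_aux {G : Type*} [Group G] [TopologicalSpace G] [IsTopologicalGroup G]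
    [T2Space G] [MeasurableSpace G] [BorelSpace G] [MeasurableMul₂ G]
    {μ ν : Measure G} (hμ1 : μ Set.univ = 1) (hν1 : ν Set.univ = 1)
    (h : (μ.prod ν).map (fun p : G × G => p.1 * p.2) = Measure.dirac (1 : G)) :
    ∃ x : G, μ = Measure.dirac x ∧ ν = Measure.dirac x⁻¹ := by
  have hμf : IsFiniteMeasure μ := ⟨by rw [hμ1]; exact ENNReal.one_lt_top⟩
  have hνf : IsFiniteMeasure ν := ⟨by rw [hν1]; exact ENNReal.one_lt_top⟩
  have hmul : Measurable fun p : G × G => p.1 * p.2 := measurable_mul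
  set S : Set (G × G) := (fun p : G × G => p.1 * p.2) ⁻¹' {1} with hSdef
  have hS : MeasurableSet S := hmul (measurableSet_singleton 1)
  have hprodS : (μ.prod ν) S = 1 := by
    have := congrArg (fun m : Measure G => m {1}) h
    simp only [Measure.map_apply hmul (measurableSet_singleton 1),
      Measure.dirac_apply' _ (measurableSet_singleton 1)] at this
    simpa using this
  have hslice : ∀ a : G, Prod.mk a ⁻¹' S = {a⁻¹} := by
    intro a
    ext b
    simp [hSdef, mul_eq_one_iff_inv_eq, eq_comm]
  -- Fubini: ∫ ν {a⁻¹} dμ = 1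
  have hint : ∫⁻ a, ν {a⁻¹} ∂μ = 1 := by
    rw [← hprodS, Measure.prod_apply hS]
    congr 1
    ext a
    rw [hslice a]
  set f : G → ENNReal := fun a => ν {a⁻¹} with hfdef
  have hfm : Measurable f := by
    have : Measurable fun a : G => ν (Prod.mk a ⁻¹' S) := measurable_measure_prodMk_left hS
    simpa only [hslice] using this
  have hfle : ∀ a, f a ≤ 1 := fun a => by
    rw [← hν1]; exact measure_mono (subset_univ _)
  -- f = 1 a.e.
  have hae : ∀ᵐ a ∂μ, f a = 1 := by
    have hsub : ∫⁻ a, (1 - f a) ∂μ = 0 := by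
      rw [lintegral_sub hfm (by rw [hint]; exact ENNReal.one_ne_top)
        (Filter.Eventually.of_forall hfle), hint, lintegral_one, hμ1, tsub_self]
    have := (lintegral_eq_zero_iff ((measurable_const.sub hfm))).mp hsub
    filter_upwards [this] with a ha
    have h1 : (1 : ENNReal) ≤ f a := by
      have := tsub_eq_zero_iff_le.mp ha
      exact this
    exact le_antisymm (hfle a) h1
  have hne : (MeasureTheory.ae μ).NeBot := by
    refine ae_neBot.mpr ?_
    intro h0
    rw [h0] at hμ1
    simp at hμ1
  obtain ⟨x, hx0⟩ := hae.exists
  have hx : ν {x⁻¹} = 1 := hx0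
  -- ν = dirac x⁻¹
  have hνd : ν = Measure.dirac x⁻¹ := by
    have hcompl : ν ({x⁻¹}ᶜ) = 0 := by
      have := measure_compl (measurableSet_singleton (x⁻¹)) (measure_ne_top ν _)
      rw [this, hν1, hx]
      simp
    ext s hs
    rw [Measure.dirac_apply' _ hs]
    by_cases hxs : x⁻¹ ∈ s
    · have h1 : ν s = 1 := by
        refine le_antisymm (by rw [← hν1]; exact measure_mono (subset_univ _)) ?_
        calc (1 : ENNReal) = ν {x⁻¹} := hx.symm
        _ ≤ ν s := measure_mono (singleton_subset_iff.mpr hxs)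
      rw [h1, indicator_of_mem hxs]; rfl
    · have h0 : ν s = 0 := measure_mono_null (fun y hy => by
        simp only [mem_compl_iff, mem_singleton_iff]
        rintro rfl; exact hxs hy) hcompl
      rw [h0, indicator_of_notMem hxs]
  -- μ = dirac x
  refine ⟨x, ?_, hνd⟩
  have hmap : (μ.prod ν).map (fun p : G × G => p.1 * p.2) = μ.map (· * x⁻¹) := by
    rw [hνd, Measure.prod_dirac, Measure.map_map hmul (measurable_prodMk_right)]
    rfl
  have : μ.map (· * x⁻¹) = Measure.dirac 1 := by rw [← hmap, h]
  have := congrArg (fun m : Measure G => m.map (· * x)) this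
  simp only [Measure.map_map (measurable_mul_const x) (measurable_mul_const x⁻¹)] at this
  rw [Measure.map_dirac' (measurable_mul_const x)] at this
  have hcomp : ((· * x) ∘ (· * x⁻¹)) = id := by
    funext a; simp
  rw [hcomp, Measure.map_id] at this
  simpa using this

/-- If the convolution of two Radon probability measures on a Hausdorff topological group is
the Dirac measure at the identity, then both measures are Dirac measures at mutually inverse
points. -/
theorem mconv_eq_dirac_one {G : Type*} [Group G] [TopologicalSpace G] [IsTopologicalGroup G]
    [T2Space G] [MeasurableSpace G] [BorelSpace G] [MeasurableMul₂ G]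
    {μ ν : Measure G} (hμ : IsRadonProb μ) (hν : IsRadonProb ν)
    (h : mconv μ ν = Measure.dirac (1 : G)) :
    ∃ x : G, μ = Measure.dirac x ∧ ν = Measure.dirac x⁻¹ := by
  exact mconv_eq_dirac_one_aux hμ.1 hν.1 h
end

section
/- A nonempty compact subset K of a Hausdorff topological group G satisfies K·K = K if and only if K is a compact subgroup of G, i.e., 1 ∈ K, K is closed under multiplication, and K⁻¹ = K. -/
open Set Pointwise

/-- A nonempty compact subset `K` of a Hausdorff topological group satisfies `K * K = K` iff
`K` is a compact subgroup: it contains the identity, is closed under multiplication, and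
satisfies `K⁻¹ = K`. -/
theorem sq_eq_self_iff_subgroup {G : Type*} [Group G] [TopologicalSpace G]
    [IsTopologicalGroup G] [T2Space G] {K : Set G} (hne : K.Nonempty) (hc : IsCompact K) :
    K * K = K ↔ ((1 : G) ∈ K ∧ (∀ x ∈ K, ∀ y ∈ K, x * y ∈ K) ∧ K⁻¹ = K) := by
  constructor
  · intro h
    have hK : IsClosed K := hc.isClosed
    have hmul : ∀ x ∈ K, ∀ y ∈ K, x * y ∈ K := fun x hx y hy => h ▸ mul_mem_mul hx hy
    have hpow : ∀ x ∈ K, ∀ n : ℕ, x ^ (n + 1) ∈ K := by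
      intro x hx n
      induction n with
      | zero => simpa using hx
      | succ n ih => rw [pow_succ]; exact hmul _ ih _ hx
    have key : ∀ x ∈ K, (1 : G) ∈ K ∧ x⁻¹ ∈ K := by
      intro x hx
      set T : Set G := Set.range (fun n : ℕ => x ^ (n + 1)) with hT
      have hTK : T ⊆ K := by rintro _ ⟨n, rfl⟩; exact hpow x hx n
      have hTne : T.Nonempty := ⟨x, 0, by simp⟩
      have hTmul : ∀ a ∈ T, ∀ b ∈ T, a * b ∈ T := by
        rintro _ ⟨n, rfl⟩ _ ⟨m, rfl⟩
        exact ⟨n + m + 1, by rw [← pow_add]; ring_nf⟩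
      have hSmul : ∀ a ∈ closure T, ∀ b ∈ closure T, a * b ∈ closure T := by
        intro a ha b hb
        let S : Subsemigroup G := ⟨T, fun {p} {q} hp hq => hTmul p hp q hq⟩
        exact S.topologicalClosure.mul_mem ha hb
      have hSK : closure T ⊆ K := closure_minimal hTK hK
      have hSc : IsCompact (closure T) := hc.of_isClosed_subset isClosed_closure hSK
      obtain ⟨m, hm, hmm⟩ := exists_idempotent_in_compact_subsemigroup
        (fun r => continuous_mul_right r) (closure T) hTne.closure hSc hSmul
      have hm1 : m = 1 := by
        have := mul_right_cancel (a := m) (b := m) (c := 1) (by simpa using hmm)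
        simpa using this
      have h1T : (1 : G) ∈ closure T := hm1 ▸ hm
      refine ⟨hSK h1T, ?_⟩
      have hxT : x⁻¹ • T ⊆ K := by
        rintro _ ⟨_, ⟨n, rfl⟩, rfl⟩
        simp only [smul_eq_mul]
        rcases n with _ | n
        · simpa using hSK h1T
        · have : x⁻¹ * x ^ (n + 1 + 1) = x ^ (n + 1) := by group
          rw [this]; exact hpow x hx n
      have : x⁻¹ ∈ x⁻¹ • closure T := ⟨1, h1T, by simp⟩
      rw [← closure_smul] at this
      exact closure_minimal hxT hK this
    obtain ⟨x, hx⟩ := hne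
    refine ⟨(key x hx).1, hmul, ?_⟩
    ext a
    constructor
    · intro ha
      have : a⁻¹ ∈ K := ha
      simpa using (key _ this).2
    · intro ha
      exact (key a ha).2
  · rintro ⟨h1, hmul, hinv⟩
    apply subset_antisymm
    · rintro _ ⟨a, ha, b, hb, rfl⟩
      exact hmul a ha b hb
    · intro a ha
      exact ⟨a, ha, 1, h1, mul_one a⟩
end

section
/- If A and B are nonempty compact subsets of a Hausdorff topological group G satisfying A·A = A, B·B = B, A·B = A, and B·A = B, then A = B. In particular, the semigroup exp(G) of nonempty compact subsets of G contains no semigroup of left zeros with more than one element. -/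
open Set Pointwise

/-- If `A` and `B` are nonempty compact subsets of a Hausdorff topological group with
`A * A = A`, `B * B = B`, `A * B = A` and `B * A = B`, then `A = B`; in particular `exp G`
contains no semigroup of left zeros with more than one element. -/
theorem no_left_zeros {G : Type*} [Group G] [TopologicalSpace G] [IsTopologicalGroup G]
    [T2Space G] {A B : Set G} (hAne : A.Nonempty) (hAc : IsCompact A) (hBne : B.Nonempty)
    (hBc : IsCompact B) (hA : A * A = A) (hB : B * B = B) (hAB : A * B = A)
    (hBA : B * A = B) : A = B := by
  have one_mem : ∀ (S : Set G), S.Nonempty → IsCompact S → S * S = S → (1 : G) ∈ S := by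
    intro S hne hc hS
    obtain ⟨m, hm, hmm⟩ := exists_idempotent_in_compact_subsemigroup
      (fun r => continuous_mul_right r) S hne hc
      (fun x hx y hy => hS ▸ mul_mem_mul hx hy)
    have : m = 1 := by
      have := mul_left_cancel (a := m) (b := m) (c := 1) (by simpa using hmm)
      exact this
    exact this ▸ hm
  have h1A := one_mem A hAne hAc hA
  have h1B := one_mem B hBne hBc hB
  apply le_antisymm
  · intro a ha
    exact hBA ▸ (by simpa using mul_mem_mul h1B ha)
  · intro b hb
    exact hAB ▸ (by simpa using mul_mem_mul h1A hb)
end
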